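/- arXiv:2201.00971 — 7 statements merged into one kernel-verified Lean document; each statement's English description precedes it below -/
import Mathlib

section
/- Weak triangle inequality for Rényi divergence: for pmfs P, Q, R on a finite type (with Q and R of full support) and α > 1, D_α(P‖Q) ≤ ((α − 1/2)/(α − 1)) · D_{2α}(P‖R) + D_{2α−1}(R‖Q). -/
open Finset Real

def IsPMF {V : Type*} [Fintype V] (P : V → ℝ) : Prop :=
  (∀ x, 0 ≤ P x) ∧ ∑ x, P x = 1

noncomputable def renyiD {V : Type*} [Fintype V] (α : ℝ) (P Q : V → ℝ) : ℝ :=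
  (α - 1)⁻¹ * Real.log (∑ x, Q x * (P x / Q x) ^ α)

lemma rpow_sq_aux (x a : ℝ) (hx : 0 ≤ x) : (x ^ a) ^ 2 = x ^ (2 * a) := by
  rw [← Real.rpow_natCast (x ^ a) 2, ← Real.rpow_mul hx]
  norm_num [mul_comm]

/-- Weak triangle inequality for the Rényi divergence. -/
theorem renyi_weak_triangle {V : Type*} [Fintype V] [Nonempty V]
    (P Q R : V → ℝ) (hP : IsPMF P) (hQ : IsPMF Q) (hR : IsPMF R)
    (hQpos : ∀ x, 0 < Q x) (hRpos : ∀ x, 0 < R x)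
    {α : ℝ} (hα : 1 < α) :
    renyiD α P Q ≤ ((α - 1/2) / (α - 1)) * renyiD (2*α) P R + renyiD (2*α - 1) R Q := by
  obtain ⟨hPnn, hPsum⟩ := hP
  obtain ⟨x0, hx0⟩ : ∃ x, 0 < P x := by
    by_contra h
    push_neg at h
    have : ∑ x, P x = 0 :=
      Finset.sum_eq_zero fun x _ => le_antisymm (h x) (hPnn x)
    rw [this] at hPsum; norm_num at hPsum
  set f : V → ℝ := fun x => P x ^ α * R x ^ ((1:ℝ)/2 - α) with hf
  set g : V → ℝ := fun x => R x ^ (α - 1/2) * Q x ^ (1 - α) with hg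
  -- pointwise identities
  have hfg : ∀ x, Q x * (P x / Q x) ^ α = f x * g x := by
    intro x
    have hq := hQpos x; have hr := hRpos x
    have : f x * g x = P x ^ α * (R x ^ ((1:ℝ)/2 - α) * R x ^ (α - 1/2)) * Q x ^ (1 - α) := by
      simp only [hf, hg]; ring
    rw [this, ← Real.rpow_add hr]
    have h0 : (1:ℝ)/2 - α + (α - 1/2) = 0 := by ring
    rw [h0, Real.rpow_zero, mul_one, Real.div_rpow (hPnn x) hq.le,
      Real.rpow_sub hq, Real.rpow_one]
    ring
  have hf2 : ∀ x, R x * (P x / R x) ^ (2*α) = f x ^ 2 := by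
    intro x
    have hr := hRpos x
    have : f x ^ 2 = (P x ^ α) ^ 2 * (R x ^ ((1:ℝ)/2 - α)) ^ 2 := by
      simp only [hf]; ring
    rw [this, rpow_sq_aux _ _ (hPnn x), rpow_sq_aux _ _ hr.le,
      Real.div_rpow (hPnn x) hr.le,
      show 2 * ((1:ℝ)/2 - α) = 1 - 2*α by ring,
      Real.rpow_sub hr, Real.rpow_one]
    ring
  have hg2 : ∀ x, Q x * (R x / Q x) ^ (2*α - 1) = g x ^ 2 := by
    intro x
    have hq := hQpos x; have hr := hRpos x
    have : g x ^ 2 = (R x ^ (α - 1/2)) ^ 2 * (Q x ^ (1 - α)) ^ 2 := by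
      simp only [hg]; ring
    rw [this, rpow_sq_aux _ _ hr.le, rpow_sq_aux _ _ hq.le,
      show 2 * (α - (1:ℝ)/2) = 2*α - 1 by ring,
      show 2 * ((1:ℝ) - α) = 1 - (2*α - 1) by ring,
      Real.rpow_sub hq, Real.rpow_one,
      Real.div_rpow hr.le hq.le]
    ring
  set T := ∑ x, Q x * (P x / Q x) ^ α with hT
  set S1 := ∑ x, R x * (P x / R x) ^ (2*α) with hS1
  set S2 := ∑ x, Q x * (R x / Q x) ^ (2*α - 1) with hS2
  -- positivity
  have hTpos : 0 < T := by
    apply Finset.sum_pos' (fun x _ => mul_nonneg (hQpos x).le (Real.rpow_nonneg (div_nonneg (hPnn x) (hQpos x).le) _))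
    exact ⟨x0, Finset.mem_univ x0,
      mul_pos (hQpos x0) (Real.rpow_pos_of_pos (div_pos hx0 (hQpos x0)) _)⟩
  have hS1pos : 0 < S1 := by
    apply Finset.sum_pos' (fun x _ => mul_nonneg (hRpos x).le (Real.rpow_nonneg (div_nonneg (hPnn x) (hRpos x).le) _))
    exact ⟨x0, Finset.mem_univ x0,
      mul_pos (hRpos x0) (Real.rpow_pos_of_pos (div_pos hx0 (hRpos x0)) _)⟩
  have hS2pos : 0 < S2 :=
    Finset.sum_pos (fun x _ =>
      mul_pos (hQpos x) (Real.rpow_pos_of_pos (div_pos (hRpos x) (hQpos x)) _))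
      Finset.univ_nonempty
  -- Cauchy–Schwarz
  have hCS : T ^ 2 ≤ S1 * S2 := by
    have hT' : T = ∑ x, f x * g x := Finset.sum_congr rfl fun x _ => hfg x
    have hS1' : S1 = ∑ x, f x ^ 2 := Finset.sum_congr rfl fun x _ => hf2 x
    have hS2' : S2 = ∑ x, g x ^ 2 := Finset.sum_congr rfl fun x _ => hg2 x
    rw [hT', hS1', hS2']
    exact Finset.sum_mul_sq_le_sq_mul_sq _ _ _
  have hlog : 2 * Real.log T ≤ Real.log S1 + Real.log S2 := by
    have h1 : Real.log (T ^ 2) ≤ Real.log (S1 * S2) :=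
      Real.log_le_log (by positivity) hCS
    rwa [Real.log_pow, Real.log_mul hS1pos.ne' hS2pos.ne'] at h1
    
  -- conclude
  have hα1 : (0:ℝ) < α - 1 := by linarith
  have h2α1 : (0:ℝ) < 2*α - 1 := by linarith
  simp only [renyiD, ← hT, ← hS1, ← hS2]
  have e1 : (α - 1)⁻¹ = 2 * (2*(α-1))⁻¹ := by
    field_simp
  have e2 : ((α - 1/2) / (α - 1)) * (2*α - 1)⁻¹ = (2*(α-1))⁻¹ := by
    field_simp
    exact div_self (by linarith : (0:ℝ) < α * 2 - 1).ne'
  have e3 : (2*α - 1 - 1)⁻¹ = (2*(α-1))⁻¹ := by rw [show 2*α - 1 - 1 = 2*(α-1) by ring]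
  rw [e1, ← mul_assoc, e2, e3]
  have hinv : (0:ℝ) ≤ (2*(α-1))⁻¹ := by positivity
  calc 2 * (2*(α-1))⁻¹ * Real.log T = (2*(α-1))⁻¹ * (2 * Real.log T) := by ring
    _ ≤ (2*(α-1))⁻¹ * (Real.log S1 + Real.log S2) :=
        mul_le_mul_of_nonneg_left hlog hinv
    _ = (2*(α-1))⁻¹ * Real.log S1 + (2*(α-1))⁻¹ * Real.log S2 := by ring
end

section
/- Conversion from partition-level to user-level Rényi bounds via the weak triangle inequality: let α > 2 and suppose P, P', P'' are pmfs on a finite type (with full support) such that the symmetrized Rényi divergences satisfy D_α^sym(P‖P'') ≤ ε and D_α^sym(P'‖P'') ≤ ε, where D_α^sym(X‖Y) = max(D_α(X‖Y), D_α(Y‖X)). Then D_{α/2}(P‖P') ≤ ((2α − 3)/(α − 2)) · ε. -/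
open Finset Real

/-- Symmetrized Rényi divergence. -/
noncomputable def renyiDSym {V : Type*} [Fintype V] (α : ℝ) (P Q : V → ℝ) : ℝ :=
  max (renyiD α P Q) (renyiD α Q P)

section Aux

variable {V : Type*} [Fintype V] [Nonempty V]

lemma renyi_sum_pos {P Q : V → ℝ} (hP : ∀ x, 0 < P x) (hQ : ∀ x, 0 < Q x) (β : ℝ) :
    0 < ∑ x, Q x * (P x / Q x) ^ β :=
  Finset.sum_pos (fun x _ => mul_pos (hQ x) (Real.rpow_pos_of_pos (div_pos (hP x) (hQ x)) β))
    Finset.univ_nonempty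

/-- change of measure -/
lemma renyi_sum_change {P Q : V → ℝ} (hP : ∀ x, 0 < P x) (hQ : ∀ x, 0 < Q x) (β : ℝ) :
    ∑ x, Q x * (P x / Q x) ^ β = ∑ x, P x * (P x / Q x) ^ (β - 1) := by
  refine Finset.sum_congr rfl fun x _ => ?_
  have hpos : 0 < P x / Q x := div_pos (hP x) (hQ x)
  have h : (P x / Q x) ^ β = (P x / Q x) ^ (β - 1) * (P x / Q x) := by
    rw [← Real.rpow_add_one (ne_of_gt hpos), sub_add_cancel]
  have hQc : Q x * (P x / Q x) = P x := by
    rw [mul_comm]; exact div_mul_cancel₀ _ (hQ x).ne'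
  calc Q x * (P x / Q x) ^ β
      = (P x / Q x) ^ (β - 1) * (Q x * (P x / Q x)) := by rw [h]; ring
    _ = P x * (P x / Q x) ^ (β - 1) := by rw [hQc]; ring

lemma renyi_nonneg {P Q : V → ℝ} (hPm : IsPMF P) (hQm : IsPMF Q)
    (hP : ∀ x, 0 < P x) (hQ : ∀ x, 0 < Q x)
    {β : ℝ} (hβ : 1 < β) : 0 ≤ renyiD β P Q := by
  have hsum : ∑ x, Q x * (P x / Q x) = 1 := by
    rw [← hPm.2]
    refine Finset.sum_congr rfl fun x _ => ?_
    rw [mul_comm]; exact div_mul_cancel₀ _ (hQ x).ne'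
  have h1 : (1:ℝ) ≤ ∑ x, Q x * (P x / Q x) ^ β := by
    have := Real.rpow_arith_mean_le_arith_mean_rpow Finset.univ Q (fun x => P x / Q x)
      (fun i _ => (hQ i).le) hQm.2 (fun i _ => (div_pos (hP i) (hQ i)).le) hβ.le
    rwa [hsum, Real.one_rpow] at this
  exact mul_nonneg (inv_nonneg.mpr (by linarith)) (Real.log_nonneg h1)

lemma renyi_mono {P Q : V → ℝ} (hPm : IsPMF P) (hP : ∀ x, 0 < P x) (hQ : ∀ x, 0 < Q x)
    {a b : ℝ} (ha : 1 < a) (hab : a ≤ b) : renyiD a P Q ≤ renyiD b P Q := by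
  have hb : 1 < b := lt_of_lt_of_le ha hab
  have ha1 : (0:ℝ) < a - 1 := by linarith
  have hb1 : (0:ℝ) < b - 1 := by linarith
  set p : ℝ := (b - 1) / (a - 1) with hp_def
  have hp : 1 ≤ p := (one_le_div ha1).mpr (by linarith)
  have hz : ∀ x : V, ((P x / Q x) ^ (a-1)) ^ p = (P x / Q x) ^ (b-1) := by
    intro x
    rw [← Real.rpow_mul (div_pos (hP x) (hQ x)).le]
    congr 1
    rw [hp_def, mul_comm, div_mul_cancel₀ _ ha1.ne']
  have hSa_pos : 0 < ∑ x, P x * (P x / Q x) ^ (a-1) := by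
    rw [← renyi_sum_change hP hQ]; exact renyi_sum_pos hP hQ a
  have hSb_pos : 0 < ∑ x, P x * (P x / Q x) ^ (b-1) := by
    rw [← renyi_sum_change hP hQ]; exact renyi_sum_pos hP hQ b
  have key := Real.arith_mean_le_rpow_mean Finset.univ P (fun x => (P x / Q x) ^ (a-1))
    (fun i _ => hPm.1 i) hPm.2
    (fun i _ => (Real.rpow_pos_of_pos (div_pos (hP i) (hQ i)) _).le) hp
  simp only [hz] at key
  have hlog : Real.log (∑ x, P x * (P x / Q x) ^ (a-1))
      ≤ (1/p) * Real.log (∑ x, P x * (P x / Q x) ^ (b-1)) := by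
    calc Real.log (∑ x, P x * (P x / Q x) ^ (a-1))
        ≤ Real.log ((∑ x, P x * (P x / Q x) ^ (b-1)) ^ (1/p)) := Real.log_le_log hSa_pos key
      _ = (1/p) * Real.log (∑ x, P x * (P x / Q x) ^ (b-1)) := Real.log_rpow hSb_pos _
  have hEq : (a-1)⁻¹ * ((1/p) * Real.log (∑ x, P x * (P x / Q x) ^ (b-1)))
      = (b-1)⁻¹ * Real.log (∑ x, P x * (P x / Q x) ^ (b-1)) := by
    rw [hp_def]
    field_simp
  rw [renyiD, renyiD, renyi_sum_change hP hQ a, renyi_sum_change hP hQ b]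
  calc (a-1)⁻¹ * Real.log (∑ x, P x * (P x / Q x) ^ (a-1))
      ≤ (a-1)⁻¹ * ((1/p) * Real.log (∑ x, P x * (P x / Q x) ^ (b-1))) :=
        mul_le_mul_of_nonneg_left hlog (inv_nonneg.mpr ha1.le)
    _ = _ := hEq

lemma renyi_triangle {X Y Z : V → ℝ} (hX : ∀ x, 0 < X x) (hY : ∀ x, 0 < Y x)
    (hZ : ∀ x, 0 < Z x) {β : ℝ} (hβ : 1 < β) :
    renyiD β X Y ≤ ((β - 1/2)/(β - 1)) * renyiD (2*β) X Z + renyiD (2*β - 1) Z Y := by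
  have hβ1 : (0:ℝ) < β - 1 := by linarith
  have key : ∀ (A B : ℝ), 0 < A → 0 < B → ∀ s : ℝ, B * (A/B)^s = A^s * B^(1-s) := by
    intro A B hA hB s
    rw [Real.div_rpow hA.le hB.le, Real.rpow_sub hB, Real.rpow_one]
    have := (Real.rpow_pos_of_pos hB s).ne'
    field_simp
  have hsq : ∀ (A : ℝ), 0 < A → ∀ s : ℝ, (A^s)^2 = A^(2*s) := by
    intro A hA s
    rw [← Real.rpow_natCast (A^s) 2, ← Real.rpow_mul hA.le]
    norm_num
    ring_nf
  set f : V → ℝ := fun x => X x ^ β * Z x ^ ((1-2*β)/2) with hf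
  set g : V → ℝ := fun x => Z x ^ ((2*β-1)/2) * Y x ^ (1-β) with hg
  have hfg : ∀ x, f x * g x = Y x * (X x / Y x) ^ β := by
    intro x
    have hz0 : Z x ^ ((1-2*β)/2) * Z x ^ ((2*β-1)/2) = 1 := by
      rw [← Real.rpow_add (hZ x), show (1-2*β)/2 + (2*β-1)/2 = (0:ℝ) from by ring,
        Real.rpow_zero]
    calc f x * g x
        = X x ^ β * Y x ^ (1-β) * (Z x ^ ((1-2*β)/2) * Z x ^ ((2*β-1)/2)) := by
          simp only [hf, hg]; ring
      _ = X x ^ β * Y x ^ (1-β) := by rw [hz0, mul_one]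
      _ = Y x * (X x / Y x) ^ β := (key _ _ (hX x) (hY x) β).symm
  have hf2 : ∀ x, f x ^ 2 = Z x * (X x / Z x) ^ (2*β) := by
    intro x
    calc f x ^ 2 = (X x ^ β)^2 * (Z x ^ ((1-2*β)/2))^2 := by simp only [hf]; ring
      _ = X x ^ (2*β) * Z x ^ (2*((1-2*β)/2)) := by rw [hsq _ (hX x), hsq _ (hZ x)]
      _ = X x ^ (2*β) * Z x ^ (1-2*β) := by rw [show 2*((1-2*β)/2) = 1-2*β from by ring]
      _ = Z x * (X x / Z x) ^ (2*β) := (key _ _ (hX x) (hZ x) (2*β)).symm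
  have hg2 : ∀ x, g x ^ 2 = Y x * (Z x / Y x) ^ (2*β-1) := by
    intro x
    calc g x ^ 2 = (Z x ^ ((2*β-1)/2))^2 * (Y x ^ (1-β))^2 := by simp only [hg]; ring
      _ = Z x ^ (2*((2*β-1)/2)) * Y x ^ (2*(1-β)) := by rw [hsq _ (hZ x), hsq _ (hY x)]
      _ = Z x ^ (2*β-1) * Y x ^ (1-(2*β-1)) := by
          rw [show 2*((2*β-1)/2) = 2*β-1 from by ring, show 2*(1-β) = 1-(2*β-1) from by ring]
      _ = Y x * (Z x / Y x) ^ (2*β-1) := (key _ _ (hZ x) (hY x) (2*β-1)).symm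
  have hS : 0 < ∑ x, Y x * (X x / Y x) ^ β := renyi_sum_pos hX hY β
  have hA : 0 < ∑ x, Z x * (X x / Z x) ^ (2*β) := renyi_sum_pos hX hZ (2*β)
  have hB : 0 < ∑ x, Y x * (Z x / Y x) ^ (2*β-1) := renyi_sum_pos hZ hY (2*β-1)
  have hCS : (∑ x, Y x * (X x / Y x) ^ β)^2
      ≤ (∑ x, Z x * (X x / Z x) ^ (2*β)) * (∑ x, Y x * (Z x / Y x) ^ (2*β-1)) := by
    have h := Finset.sum_mul_sq_le_sq_mul_sq Finset.univ f g
    simp only [hfg, hf2, hg2] at h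
    exact h
  have hlog : 2 * Real.log (∑ x, Y x * (X x / Y x) ^ β)
      ≤ Real.log (∑ x, Z x * (X x / Z x) ^ (2*β))
        + Real.log (∑ x, Y x * (Z x / Y x) ^ (2*β-1)) := by
    have h1 := Real.log_le_log (by positivity) hCS
    rwa [Real.log_pow, Real.log_mul hA.ne' hB.ne', Nat.cast_ofNat] at h1
  rw [renyiD, renyiD, renyiD]
  have h1 : β - 1 ≠ 0 := hβ1.ne'
  have h2 : 2*β - 1 ≠ 0 := by intro h; nlinarith
  have h3 : 2*β - 1 - 1 ≠ 0 := by intro h; nlinarith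
  have hEq : ((β-1/2)/(β-1)) * ((2*β-1)⁻¹ * Real.log (∑ x, Z x * (X x / Z x) ^ (2*β)))
      + (2*β-1-1)⁻¹ * Real.log (∑ x, Y x * (Z x / Y x) ^ (2*β-1))
      = (β-1)⁻¹ * ((Real.log (∑ x, Z x * (X x / Z x) ^ (2*β))
        + Real.log (∑ x, Y x * (Z x / Y x) ^ (2*β-1)))/2) := by
    rw [show 2*β-1-1 = 2*(β-1) by ring, show β-1/2 = (2*β-1)/2 by ring]
    field_simp
  rw [hEq]
  exact mul_le_mul_of_nonneg_left (by linarith) (inv_nonneg.mpr hβ1.le)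

end Aux

/-- Conversion from partition-level to user-level Rényi bounds. -/
theorem partition_to_user_conversion {V : Type*} [Fintype V] [Nonempty V]
    (P P' P'' : V → ℝ) (hP : IsPMF P) (hP' : IsPMF P') (hP'' : IsPMF P'')
    (hPpos : ∀ x, 0 < P x) (hP'pos : ∀ x, 0 < P' x) (hP''pos : ∀ x, 0 < P'' x)
    {α ε : ℝ} (hα : 2 < α)
    (h1 : renyiDSym α P P'' ≤ ε) (h2 : renyiDSym α P' P'' ≤ ε) :
    renyiD (α/2) P P' ≤ ((2*α - 3) / (α - 2)) * ε := by
  have hβ : (1:ℝ) < α/2 := by linarith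
  have htri := renyi_triangle hPpos hP'pos hP''pos hβ
  have h2b : 2 * (α/2) = α := by ring
  rw [h2b] at htri
  have hd1 : renyiD α P P'' ≤ ε := le_trans (le_max_left _ _) h1
  have hd2 : renyiD (α - 1) P'' P' ≤ ε := by
    have hmono : renyiD (α - 1) P'' P' ≤ renyiD α P'' P' :=
      renyi_mono hP'' hP''pos hP'pos (by linarith) (by linarith)
    exact hmono.trans (le_trans (le_max_right _ _) h2)
  have hc : (0:ℝ) ≤ (α/2 - 1/2)/(α/2 - 1) := by
    apply div_nonneg <;> linarith
  calc renyiD (α/2) P P' ≤ ((α/2 - 1/2)/(α/2 - 1)) * renyiD α P P'' + renyiD (α-1) P'' P' := htri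
    _ ≤ ((α/2 - 1/2)/(α/2 - 1)) * ε + ε :=
        add_le_add (mul_le_mul_of_nonneg_left hd1 hc) hd2
    _ = ((2*α - 3) / (α - 2)) * ε := by
        have hne : α/2 - 1 ≠ 0 := by intro h; nlinarith
        have hne2 : α - 2 ≠ 0 := by intro h; nlinarith
        field_simp
        ring
end

section
/- Chain rule upper bound for Rényi divergence of joint distributions: let (X, Y) and (X', Y') be joint pmfs on a product of finite types Σ₁ × Σ₂ with the primed joint pmf strictly positive. Then for α > 1, D_α((X,Y)‖(X',Y')) ≤ D_α(X‖X') + max over x ∈ Σ₁ of D_α(Y|x ‖ Y'|x), where X, X' are the marginals on Σ₁ and Y|x, Y'|x are the conditional distributions on Σ₂ given first coordinate x. -/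
open Finset Real

/-- Marginal of a joint pmf on the first coordinate. -/
noncomputable def marginal {V₁ V₂ : Type*} [Fintype V₁] [Fintype V₂]
    (p : V₁ × V₂ → ℝ) : V₁ → ℝ := fun x => ∑ y, p (x, y)

/-- Conditional pmf on the second coordinate given the first. -/
noncomputable def conditional {V₁ V₂ : Type*} [Fintype V₁] [Fintype V₂]
    (p : V₁ × V₂ → ℝ) (x : V₁) : V₂ → ℝ := fun y => p (x, y) / marginal p x

/-- Chain-rule upper bound for Rényi divergence of joint distributions:
`D_α((X,Y)‖(X',Y')) ≤ D_α(X‖X') + max_x D_α(Y|x ‖ Y'|x)`. -/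
theorem renyi_chain_rule_bound {V₁ V₂ : Type*} [Fintype V₁] [Fintype V₂]
    [Nonempty V₁] [Nonempty V₂]
    (p p' : V₁ × V₂ → ℝ) (hp : IsPMF p) (hp' : IsPMF p')
    (hp'pos : ∀ z, 0 < p' z)
    (hppos : ∀ x, 0 < marginal p x)
    {α : ℝ} (hα : 1 < α) :
    renyiD α p p' ≤
      renyiD α (marginal p) (marginal p') +
        ⨆ x : V₁, renyiD α (conditional p x) (conditional p' x) := by
  have hα' : (0:ℝ) < α - 1 := by linarith
  set S : V₁ → ℝ :=
    fun x => ∑ y, conditional p' x y * (conditional p x y / conditional p' x y) ^ α with hSdef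
  set T : V₁ → ℝ := fun x => marginal p' x * (marginal p x / marginal p' x) ^ α with hTdef
  have hm' : ∀ x, 0 < marginal p' x :=
    fun x => Finset.sum_pos (fun y _ => hp'pos (x, y)) univ_nonempty
  have hc'pos : ∀ x y, 0 < conditional p' x y :=
    fun x y => div_pos (hp'pos (x, y)) (hm' x)
  have hcnn : ∀ x y, 0 ≤ conditional p x y :=
    fun x y => div_nonneg (hp.1 (x, y)) (hppos x).le
  have hSpos : ∀ x, 0 < S x := by
    intro x
    obtain ⟨y, hy⟩ : ∃ y, 0 < p (x, y) := by
      by_contra h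
      push_neg at h
      have : marginal p x ≤ 0 := Finset.sum_nonpos (fun y _ => h y)
      exact absurd this (not_le.2 (hppos x))
    refine Finset.sum_pos' (fun y _ => ?_) ⟨y, mem_univ y, ?_⟩
    · exact mul_nonneg (hc'pos x y).le
        (Real.rpow_nonneg (div_nonneg (hcnn x y) (hc'pos x y).le) α)
    · exact mul_pos (hc'pos x y)
        (Real.rpow_pos_of_pos (div_pos (div_pos hy (hppos x)) (hc'pos x y)) α)
  have hTpos : ∀ x, 0 < T x := by
    intro x
    exact mul_pos (hm' x)
      (Real.rpow_pos_of_pos (div_pos (hppos x) (hm' x)) α)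
  have key : ∑ z : V₁ × V₂, p' z * (p z / p' z) ^ α = ∑ x, T x * S x := by
    rw [Fintype.sum_prod_type]
    refine Finset.sum_congr rfl fun x _ => ?_
    rw [Finset.mul_sum]
    refine Finset.sum_congr rfl fun y _ => ?_
    have hm0 : marginal p x ≠ 0 := (hppos x).ne'
    have hm'0 : marginal p' x ≠ 0 := (hm' x).ne'
    have hp'0 : p' (x, y) ≠ 0 := (hp'pos (x, y)).ne'
    have hratio : p (x, y) / p' (x, y) =
        (marginal p x / marginal p' x) * (conditional p x y / conditional p' x y) := by
      simp only [conditional]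
      field_simp
    rw [hratio, Real.mul_rpow (div_nonneg (hppos x).le (hm' x).le)
      (div_nonneg (hcnn x y) (hc'pos x y).le)]
    simp only [conditional]
    field_simp
    ring
  obtain ⟨x₀, -, hx₀⟩ := Finset.exists_max_image (univ : Finset V₁) S univ_nonempty
  have hsumT : 0 < ∑ x, T x := Finset.sum_pos (fun x _ => hTpos x) univ_nonempty
  have hsumTS : 0 < ∑ x, T x * S x :=
    Finset.sum_pos (fun x _ => mul_pos (hTpos x) (hSpos x)) univ_nonempty
  have hsum_le : ∑ x, T x * S x ≤ S x₀ * ∑ x, T x := by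
    rw [Finset.mul_sum]
    refine Finset.sum_le_sum fun x _ => ?_
    rw [mul_comm (S x₀)]
    exact mul_le_mul_of_nonneg_left (hx₀ x (mem_univ x)) (hTpos x).le
  have hlog : Real.log (∑ x, T x * S x) ≤ Real.log (S x₀ * ∑ x, T x) :=
    Real.log_le_log hsumTS hsum_le
  calc renyiD α p p' = (α - 1)⁻¹ * Real.log (∑ x, T x * S x) := by
        rw [renyiD, key]
    _ ≤ (α - 1)⁻¹ * Real.log (S x₀ * ∑ x, T x) :=
        mul_le_mul_of_nonneg_left hlog (inv_nonneg.2 hα'.le)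
    _ = (α - 1)⁻¹ * Real.log (∑ x, T x) + (α - 1)⁻¹ * Real.log (S x₀) := by
        rw [Real.log_mul (hSpos x₀).ne' hsumT.ne']; ring
    _ ≤ _ := by
        refine add_le_add (le_of_eq rfl) ?_
        have heq : (α - 1)⁻¹ * Real.log (S x₀) =
            renyiD α (conditional p x₀) (conditional p' x₀) := rfl
        rw [heq]
        have hb : BddAbove (Set.range fun x : V₁ =>
            renyiD α (conditional p x) (conditional p' x)) :=
          Set.Finite.bddAbove (Set.finite_range _)
        exact le_ciSup hb x₀
end

section
/- Data-processing-style bound for mixtures sharing a common component: for pmfs P, Q, R on a finite type with Q and R of full support, α > 1, and λ ∈ [0,1], D_α(λP + (1−λ)R ‖ λQ + (1−λ)R) ≤ D_α(P‖Q). -/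
open Finset Real

lemma jensen_one_le {V : Type*} [Fintype V] (P Q : V → ℝ) (hP : IsPMF P) (hQ : IsPMF Q)
    (hQpos : ∀ x, 0 < Q x) {α : ℝ} (hα : 1 < α) :
    1 ≤ ∑ x, Q x * (P x / Q x) ^ α := by
  have h := (convexOn_rpow hα.le).map_sum_le (t := Finset.univ)
    (w := Q) (p := fun x => P x / Q x) (fun i _ => (hQpos i).le) hQ.2
    (fun i _ => Set.mem_Ici.2 (div_nonneg (hP.1 i) (hQpos i).le))
  simp only [smul_eq_mul] at h
  have : ∑ x, Q x * (P x / Q x) = 1 := by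
    rw [← hP.2]; exact Finset.sum_congr rfl fun x _ => by
      rw [mul_comm, div_mul_cancel₀ _ (hQpos x).ne']
  rw [this, Real.one_rpow] at h
  exact h

lemma pointwise_le {α : ℝ} (hα : 1 < α) {p r q s l : ℝ} (hp : 0 ≤ p) (hr : 0 ≤ r)
    (hq : 0 < q) (hs : 0 < s) (hl0 : 0 ≤ l) (hl1 : l ≤ 1) :
    (l * q + (1 - l) * s) * ((l * p + (1 - l) * r) / (l * q + (1 - l) * s)) ^ α
      ≤ l * (q * (p / q) ^ α) + (1 - l) * (s * (r / s) ^ α) := by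
  set m := l * q + (1 - l) * s with hm
  have hmpos : 0 < m := by
    have h1 : 0 ≤ l * q := mul_nonneg hl0 hq.le
    rcases eq_or_lt_of_le hl1 with h | h
    · have e1 : (1 - l) * s = 0 := by rw [h]; ring
      have e2 : l * q = q := by rw [h, one_mul]
      simp only [hm]; linarith
    · have h2 : 0 < (1 - l) * s := mul_pos (by linarith) hs
      linarith
  have hl1' : 0 ≤ 1 - l := by linarith
  have ha : (0:ℝ) ≤ l * q / m := by positivity
  have hb : (0:ℝ) ≤ (1 - l) * s / m := by positivity
  have hab : l * q / m + (1 - l) * s / m = 1 := by field_simp; exact hm.symm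
  have h := (convexOn_rpow hα.le).2 (Set.mem_Ici.2 (div_nonneg hp hq.le))
    (Set.mem_Ici.2 (div_nonneg hr hs.le)) ha hb hab
  simp only [smul_eq_mul] at h
  have heq : l * q / m * (p / q) + (1 - l) * s / m * (r / s) = (l * p + (1 - l) * r) / m := by
    field_simp
  rw [heq] at h
  calc m * ((l * p + (1 - l) * r) / m) ^ α
      ≤ m * (l * q / m * (p / q) ^ α + (1 - l) * s / m * (r / s) ^ α) := by
        exact mul_le_mul_of_nonneg_left h hmpos.le
    _ = l * (q * (p / q) ^ α) + (1 - l) * (s * (r / s) ^ α) := by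
        field_simp

/-- Mixing with a common component cannot increase Rényi divergence. -/
theorem renyi_mixture_le {V : Type*} [Fintype V] [Nonempty V]
    (P Q R : V → ℝ) (hP : IsPMF P) (hQ : IsPMF Q) (hR : IsPMF R)
    (hQpos : ∀ x, 0 < Q x) (hRpos : ∀ x, 0 < R x)
    {α : ℝ} (hα : 1 < α) {l : ℝ} (hl0 : 0 ≤ l) (hl1 : l ≤ 1) :
    renyiD α (fun x => l * P x + (1 - l) * R x) (fun x => l * Q x + (1 - l) * R x)
      ≤ renyiD α P Q := by
  have hl1' : 0 ≤ 1 - l := by linarith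
  set S := ∑ x, Q x * (P x / Q x) ^ α with hS
  set M := ∑ x, (l * Q x + (1 - l) * R x) *
      ((l * P x + (1 - l) * R x) / (l * Q x + (1 - l) * R x)) ^ α with hM
  have hSone : 1 ≤ S := jensen_one_le P Q hP hQ hQpos hα
  have hmixP : IsPMF (fun x => l * P x + (1 - l) * R x) :=
    ⟨fun x => by have := hP.1 x; have := (hRpos x).le; positivity,
     by simp [Finset.sum_add_distrib, ← Finset.mul_sum, hP.2, hR.2]⟩
  have hmixQpos : ∀ x, 0 < l * Q x + (1 - l) * R x := by
    intro x
    have h1 : 0 ≤ l * Q x := mul_nonneg hl0 (hQpos x).le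
    rcases eq_or_lt_of_le hl1 with h | h
    · have e1 : (1 - l) * R x = 0 := by rw [h]; ring
      have e2 : l * Q x = Q x := by rw [h, one_mul]
      have := hQpos x; linarith
    · have h2 : 0 < (1 - l) * R x := mul_pos (by linarith) (hRpos x)
      linarith
  have hmixQ : IsPMF (fun x => l * Q x + (1 - l) * R x) :=
    ⟨fun x => (hmixQpos x).le,
     by simp [Finset.sum_add_distrib, ← Finset.mul_sum, hQ.2, hR.2]⟩
  have hMone : 1 ≤ M := jensen_one_le _ _ hmixP hmixQ hmixQpos hα
  have hMle : M ≤ S := by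
    have h1 : M ≤ l * S + (1 - l) * 1 := by
      rw [hM, hS]
      calc ∑ x, (l * Q x + (1 - l) * R x) *
            ((l * P x + (1 - l) * R x) / (l * Q x + (1 - l) * R x)) ^ α
          ≤ ∑ x, (l * (Q x * (P x / Q x) ^ α) + (1 - l) * (R x * (R x / R x) ^ α)) := by
            apply Finset.sum_le_sum
            intro x _
            exact pointwise_le hα (hP.1 x) (hRpos x).le (hQpos x) (hRpos x) hl0 hl1
        _ = l * (∑ x, Q x * (P x / Q x) ^ α) + (1 - l) * 1 := by
            rw [Finset.sum_add_distrib, ← Finset.mul_sum, ← Finset.mul_sum]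
            congr 1
            rw [← hR.2]
            congr 1
            exact Finset.sum_congr rfl fun x _ => by
              rw [div_self (hRpos x).ne', Real.one_rpow, mul_one]
    nlinarith
  have hlog : Real.log M ≤ Real.log S :=
    Real.log_le_log (by linarith) hMle
  have hinv : 0 < (α - 1)⁻¹ := by
    rw [inv_pos]; linarith
  unfold renyiD
  exact mul_le_mul_of_nonneg_left hlog hinv.le
end

section
/- GNMax counting upper bound: let n : Σ → ℕ be a vector of counts over a finite vocabulary Σ, let σ > 0, and let N be the arg-max of n(z) + G(z) over z ∈ Σ, where (G(z)) are i.i.d. real-valued Gaussian noise variables with a symmetric, exchangeable joint law. Then for any fixed token x ∈ Σ, P(N = x) ≤ 1 / |{z ∈ Σ : n(z) ≥ n(x)}|. -/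
open MeasureTheory ProbabilityTheory Finset

/-- GNMax counting upper bound: if the noise variables have an exchangeable joint
law and the noisy arg-max `N` is almost surely the unique maximizer of
`n z + G z`, then `P(N = x) ≤ 1 / #{z : n z ≥ n x}`. -/
theorem gnmax_counting_bound {V : Type*} [Fintype V] [Nonempty V] [MeasurableSpace V] [MeasurableSingletonClass V]
    {Ω : Type*} [MeasurableSpace Ω] (μ : Measure Ω) [IsProbabilityMeasure μ]
    (n : V → ℕ) (G : V → Ω → ℝ) (hGmeas : ∀ z, Measurable (G z))
    (N : Ω → V) (hNmeas : Measurable N)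
    (hargmax : ∀ᵐ ω ∂μ, ∀ z : V, z ≠ N ω →
      (n z : ℝ) + G z ω < (n (N ω) : ℝ) + G (N ω) ω)
    (hexch : ∀ e : Equiv.Perm V,
      Measure.map (fun ω => fun z => G (e z) ω) μ =
        Measure.map (fun ω => fun z => G z ω) μ)
    (x : V) :
    μ {ω | N ω = x} ≤
      1 / ((Finset.univ.filter fun z : V => n x ≤ n z).card : ENNReal) := by
  classical
  set S := Finset.univ.filter fun z : V => n x ≤ n z with hS
  have hxS : x ∈ S := by simp [hS]
  set F : Ω → (V → ℝ) := fun ω z => G z ω with hF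
  have hFmeas : Measurable F := measurable_pi_lambda _ hGmeas
  set B : V → Set (V → ℝ) :=
    fun y => {g | ∀ z, z ≠ y → (n z : ℝ) + g z < (n y : ℝ) + g y} with hB
  have hBmeas : ∀ y, MeasurableSet (B y) := by
    intro y
    have : B y = ⋂ z, ⋂ _ : z ≠ y,
        {g : V → ℝ | (n z : ℝ) + g z < (n y : ℝ) + g y} := by
      ext g; simp [hB]
    rw [this]
    refine MeasurableSet.iInter fun z => MeasurableSet.iInter fun _ => ?_
    exact measurableSet_lt (by measurability) (by measurability)
  set A : V → Set Ω := fun y => F ⁻¹' B y with hA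
  have hAmeas : ∀ y, MeasurableSet (A y) := fun y => hFmeas (hBmeas y)
  -- key comparison: for y ∈ S, μ (A x) ≤ μ (A y)
  have hkey : ∀ y ∈ S, μ (A x) ≤ μ (A y) := by
    intro y hy
    have hnxy : (n x : ℝ) ≤ n y := by
      have : n x ≤ n y := by simpa [hS] using hy
      exact_mod_cast this
    set e := Equiv.swap x y with he
    set Fe : Ω → (V → ℝ) := fun ω z => G (e z) ω with hFe
    have hFemeas : Measurable Fe := measurable_pi_lambda _ (fun z => hGmeas _)
    have hsub : Fe ⁻¹' B x ⊆ A y := by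
      intro ω hω z hz
      have h1 : ∀ w, w ≠ x → (n w : ℝ) + G (e w) ω < (n x : ℝ) + G (e x) ω := hω
      have hex : e x = y := Equiv.swap_apply_left x y
      have hey : e y = x := Equiv.swap_apply_right x y
      show (n z : ℝ) + G z ω < (n y : ℝ) + G y ω
      by_cases hzx : z = x
      · have hxy : y ≠ x := fun h => hz (hzx.trans h.symm)
        have := h1 y hxy
        rw [hex, hey] at this
        rw [hzx]
        linarith
      · have hez : e z = z := Equiv.swap_apply_of_ne_of_ne hzx hz
        have := h1 z hzx
        rw [hex, hez] at this
        linarith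
    have hmap : μ (Fe ⁻¹' B x) = μ (A x) := by
      have h1 : μ (Fe ⁻¹' B x) = (Measure.map Fe μ) (B x) :=
        (Measure.map_apply hFemeas (hBmeas x)).symm
      have h2 : μ (A x) = (Measure.map F μ) (B x) :=
        (Measure.map_apply hFmeas (hBmeas x)).symm
      rw [h1, h2, hexch e]
    calc μ (A x) = μ (Fe ⁻¹' B x) := hmap.symm
      _ ≤ μ (A y) := measure_mono hsub
  -- disjointness
  have hdisj : (S : Set V).PairwiseDisjoint A := by
    intro a _ b _ hab
    refine Set.disjoint_left.2 fun ω hωa hωb => ?_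
    have h1 := hωa b hab.symm
    have h2 := hωb a hab
    linarith
  have hsum : ∑ y ∈ S, μ (A y) ≤ 1 := by
    rw [← measure_biUnion_finset hdisj (fun y _ => hAmeas y)]
    exact prob_le_one
  have hcard : (S.card : ENNReal) * μ (A x) ≤ 1 := by
    calc (S.card : ENNReal) * μ (A x) = S.card • μ (A x) := by rw [nsmul_eq_mul]
      _ ≤ ∑ y ∈ S, μ (A y) := Finset.card_nsmul_le_sum S _ _ (fun y hy => hkey y hy)
      _ ≤ 1 := hsum
  have hNA : μ {ω | N ω = x} ≤ μ (A x) := by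
    refine measure_mono_ae ?_
    filter_upwards [hargmax] with ω hω hNω
    intro z hz
    have := hω z (by rwa [hNω])
    rwa [hNω] at this
  have hc0 : (S.card : ENNReal) ≠ 0 := by
    simp only [ne_eq, Nat.cast_eq_zero]
    exact Finset.card_ne_zero_of_mem hxS
  refine hNA.trans ?_
  rw [ENNReal.le_div_iff_mul_le (Or.inl hc0) (Or.inl (ENNReal.natCast_ne_top _))]
  rwa [mul_comm]
end

section
/- RDP-to-DP conversion: if pmfs P and Q on a finite type with full support satisfy D_α(P‖Q) ≤ ε for some α > 1 and ε ≥ 0, then for every δ ∈ (0,1) and every subset S of the type, P(S) ≤ exp(ε + log(1/δ)/(α−1)) · Q(S) + δ. -/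
open Finset Real

/-- RDP-to-approximate-DP conversion. -/
theorem rdp_to_dp {V : Type*} [Fintype V] [Nonempty V]
    (P Q : V → ℝ) (hP : IsPMF P) (hQ : IsPMF Q)
    (hPpos : ∀ x, 0 < P x) (hQpos : ∀ x, 0 < Q x)
    {α ε : ℝ} (hα : 1 < α) (hε : 0 ≤ ε) (hRDP : renyiD α P Q ≤ ε)
    {δ : ℝ} (hδ0 : 0 < δ) (hδ1 : δ < 1) (S : Finset V) :
    ∑ x ∈ S, P x ≤ Real.exp (ε + Real.log (1/δ) / (α - 1)) * ∑ x ∈ S, Q x + δ := by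
  have hα0 : (0:ℝ) < α := lt_trans one_pos hα
  have hα1 : (0:ℝ) < α - 1 := by linarith
  set A : ℝ := ∑ x, Q x * (P x / Q x) ^ α with hAdef
  have hApos : 0 < A :=
    Finset.sum_pos (fun x _ => mul_pos (hQpos x)
      (Real.rpow_pos_of_pos (div_pos (hPpos x) (hQpos x)) α)) Finset.univ_nonempty
  -- A ≤ exp ((α-1)*ε)
  have hlogA : Real.log A ≤ (α - 1) * ε := by
    have h := hRDP
    rw [renyiD] at h
    have h2 := mul_le_mul_of_nonneg_left h (le_of_lt hα1)
    rwa [mul_inv_cancel_left₀ (ne_of_gt hα1)] at h2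
  have hA_le : A ≤ Real.exp ((α - 1) * ε) := by
    calc A = Real.exp (Real.log A) := (Real.exp_log hApos).symm
      _ ≤ _ := Real.exp_le_exp.mpr hlogA
  set qS : ℝ := ∑ x ∈ S, Q x with hqSdef
  have hqS0 : 0 ≤ qS := Finset.sum_nonneg fun x _ => (hQpos x).le
  set B : ℝ := ∑ x ∈ S, Q x * (P x / Q x) ^ α with hBdef
  have hB0 : 0 ≤ B := Finset.sum_nonneg fun x _ =>
    le_of_lt (mul_pos (hQpos x) (Real.rpow_pos_of_pos (div_pos (hPpos x) (hQpos x)) α))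
  have hBA : B ≤ A :=
    Finset.sum_le_sum_of_subset_of_nonneg (Finset.subset_univ S)
      (fun x _ _ => le_of_lt (mul_pos (hQpos x)
        (Real.rpow_pos_of_pos (div_pos (hPpos x) (hQpos x)) α)))
  -- Hölder
  have hHolder : ∑ x ∈ S, P x ≤ qS ^ (1 - α⁻¹) * B ^ α⁻¹ := by
    have h := Real.inner_le_weight_mul_Lp_of_nonneg S (le_of_lt hα) Q (fun x => P x / Q x)
      (fun x => (hQpos x).le) (fun x => (div_pos (hPpos x) (hQpos x)).le)
    have heq : ∀ x ∈ S, Q x * (P x / Q x) = P x := fun x _ => by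
      rw [mul_comm, div_mul_cancel₀ _ (hQpos x).ne']
    rwa [Finset.sum_congr rfl heq] at h
  have hexp : Real.exp ((α - 1) * ε) ^ α⁻¹ = Real.exp ((α - 1) * ε * α⁻¹) := by
    rw [← Real.exp_mul]
  set M : ℝ := Real.exp ((α - 1) * ε * α⁻¹) * qS ^ (1 - α⁻¹) with hMdef
  have hPM : ∑ x ∈ S, P x ≤ M := by
    calc ∑ x ∈ S, P x ≤ qS ^ (1 - α⁻¹) * B ^ α⁻¹ := hHolder
      _ ≤ qS ^ (1 - α⁻¹) * Real.exp ((α - 1) * ε) ^ α⁻¹ := by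
          apply mul_le_mul_of_nonneg_left _ (Real.rpow_nonneg hqS0 _)
          exact Real.rpow_le_rpow hB0 (le_trans hBA hA_le) (by positivity)
      _ = M := by rw [hexp, mul_comm]
  rcases le_or_gt M δ with hM | hM
  · have : (0:ℝ) ≤ Real.exp (ε + Real.log (1/δ) / (α - 1)) * qS :=
      mul_nonneg (Real.exp_pos _).le hqS0
    linarith
  · -- δ < M; then qS > 0
    have hqSpos : 0 < qS := by
      rcases eq_or_lt_of_le hqS0 with h0 | h0
      · exfalso
        rw [hMdef, ← h0, Real.zero_rpow (by
          have : α⁻¹ < 1 := by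
            rw [inv_lt_one_iff₀]; right; exact hα
          linarith), mul_zero] at hM
        linarith
      · exact h0
    have hlogδ : Real.log δ < (α - 1) * ε * α⁻¹ + (1 - α⁻¹) * Real.log qS := by
      have h := Real.log_lt_log hδ0 hM
      rwa [hMdef, Real.log_mul (Real.exp_ne_zero _) (by positivity),
        Real.log_exp, Real.log_rpow hqSpos] at h
    have hMle : M ≤ Real.exp (ε + Real.log (1/δ) / (α - 1)) * qS := by
      have hrw : M = Real.exp ((α - 1) * ε * α⁻¹ + (1 - α⁻¹) * Real.log qS) := by
        rw [hMdef, Real.exp_add, Real.rpow_def_of_pos hqSpos, mul_comm (Real.log qS)]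
      have hrw2 : Real.exp (ε + Real.log (1/δ) / (α - 1)) * qS
          = Real.exp (ε + Real.log (1/δ) / (α - 1) + Real.log qS) := by
        rw [Real.exp_add _ (Real.log qS), Real.exp_log hqSpos]
      rw [hrw, hrw2]
      apply Real.exp_le_exp.mpr
      rw [Real.log_div one_ne_zero (ne_of_gt hδ0), Real.log_one, zero_sub]
      set L := Real.log qS
      set d := Real.log δ
      have hinv : α * α⁻¹ = 1 := mul_inv_cancel₀ (ne_of_gt hα0)
      have key : α * d ≤ (α - 1) * (ε + L) := by
        have h := mul_le_mul_of_nonneg_left hlogδ.le hα0.le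
        have he : α * ((α - 1) * ε * α⁻¹ + (1 - α⁻¹) * L) = (α - 1) * (ε + L) := by
          field_simp
        linarith [h, he.le, he.ge]
      have h3 : d ≤ α⁻¹ * (ε + L) * (α - 1) := by
        have h := mul_le_mul_of_nonneg_left key (inv_nonneg.2 hα0.le)
        have he : α⁻¹ * (α * d) = d := by field_simp
        have he2 : α⁻¹ * ((α - 1) * (ε + L)) = α⁻¹ * (ε + L) * (α - 1) := by ring
        linarith [h, he.le, he.ge, he2.le, he2.ge]
      have h4 : d / (α - 1) ≤ α⁻¹ * (ε + L) := (div_le_iff₀ hα1).mpr h3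
      have e1 : (α - 1) * ε * α⁻¹ + (1 - α⁻¹) * L = ε + L - α⁻¹ * (ε + L) := by
        field_simp
      linarith [neg_div (α - 1) d, e1, h4]
    linarith [le_trans hPM hMle]
end

section
/- Quasi-convexity consequence for SubMix aggregation: for pmfs P₁, ..., P_k and Q₁, ..., Q_k on a finite type with each Q_j of full support, α > 1, and the averaged pmfs P̄ = (1/k)∑_j P_j and Q̄ = (1/k)∑_j Q_j, we have D_α(P̄‖Q̄) ≤ max over j of D_α(P_j‖Q_j). -/
open Finset Real

/-- Subadditivity of `(p,q) ↦ q * (p/q)^α` over a finite family, by Jensen. -/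
lemma jensen_step {k : ℕ} (p q : Fin k → ℝ) (hp : ∀ j, 0 ≤ p j)
    (hq : ∀ j, 0 < q j) {α : ℝ} (hα : 1 < α) (hk : 0 < k) :
    (∑ j, q j) * ((∑ j, p j) / (∑ j, q j)) ^ α ≤ ∑ j, q j * (p j / q j) ^ α := by
  have hQs : 0 < ∑ j, q j :=
    Finset.sum_pos (fun j _ => hq j) (by simpa using Finset.univ_nonempty_iff.2 ⟨⟨0, hk⟩⟩)
  set Qs := ∑ j, q j with hQsdef
  have hconv := convexOn_rpow hα.le
  have h₀ : ∀ j ∈ Finset.univ, 0 ≤ q j / Qs := fun j _ => div_nonneg (hq j).le hQs.le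
  have h₁ : ∑ j, q j / Qs = 1 := by
    rw [← Finset.sum_div]; exact div_self hQs.ne'
  have hmem : ∀ j ∈ Finset.univ, p j / q j ∈ Set.Ici (0:ℝ) :=
    fun j _ => div_nonneg (hp j) (hq j).le
  have hJ := hconv.map_sum_le h₀ h₁ hmem
  simp only [smul_eq_mul] at hJ
  have hsum : ∑ j, q j / Qs * (p j / q j) = (∑ j, p j) / Qs := by
    have he : ∀ j, q j / Qs * (p j / q j) = p j / Qs := fun j => by
      have h1 := (hq j).ne'
      have h2 := hQs.ne'
      field_simp
    simp_rw [he, ← Finset.sum_div]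
  rw [hsum] at hJ
  have := mul_le_mul_of_nonneg_left hJ hQs.le
  calc Qs * ((∑ j, p j) / Qs) ^ α ≤ Qs * ∑ j, q j / Qs * (p j / q j) ^ α := this
    _ = ∑ j, q j * (p j / q j) ^ α := by
        rw [Finset.mul_sum]
        refine Finset.sum_congr rfl fun j _ => ?_
        have h2 := hQs.ne'
        field_simp

/-- Joint quasi-convexity of the Rényi divergence: the divergence of the
averages is at most the worst per-part divergence. -/
theorem renyi_avg_le_max {V : Type*} [Fintype V] [Nonempty V]
    {k : ℕ} [NeZero k]
    (P Q : Fin k → V → ℝ) (hP : ∀ j, IsPMF (P j)) (hQ : ∀ j, IsPMF (Q j))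
    (hQpos : ∀ j x, 0 < Q j x) {α : ℝ} (hα : 1 < α) :
    renyiD α (fun x => (1 / (k : ℝ)) * ∑ j, P j x)
             (fun x => (1 / (k : ℝ)) * ∑ j, Q j x)
      ≤ ⨆ j : Fin k, renyiD α (P j) (Q j) := by
  have hk : 0 < k := Nat.pos_of_ne_zero (NeZero.ne k)
  have hkR : (0:ℝ) < k := Nat.cast_pos.2 hk
  set S : ℝ := ∑ x, ((1 / (k : ℝ)) * ∑ j, Q j x) *
      (((1 / (k : ℝ)) * ∑ j, P j x) / ((1 / (k : ℝ)) * ∑ j, Q j x)) ^ α with hSdef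
  set A : Fin k → ℝ := fun j => ∑ x, Q j x * (P j x / Q j x) ^ α with hAdef
  -- S ≤ average of A j ≤ max A j
  have hSle : S ≤ (1 / (k : ℝ)) * ∑ j, A j := by
    rw [hSdef, hAdef]
    have hre : (1 / (k : ℝ)) * ∑ j, ∑ x, Q j x * (P j x / Q j x) ^ α
        = ∑ x, (1 / (k : ℝ)) * ∑ j, Q j x * (P j x / Q j x) ^ α := by
      rw [← Finset.mul_sum, Finset.sum_comm]
    rw [hre]
    refine Finset.sum_le_sum fun x _ => ?_
    have hratio : ((1 / (k : ℝ)) * ∑ j, P j x) / ((1 / (k : ℝ)) * ∑ j, Q j x)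
        = (∑ j, P j x) / (∑ j, Q j x) := by
      rw [mul_div_mul_left _ _ (by positivity : (1 / (k:ℝ)) ≠ 0)]
    rw [hratio, mul_assoc]
    refine mul_le_mul_of_nonneg_left ?_ (by positivity)
    exact jensen_step (fun j => P j x) (fun j => Q j x) (fun j => (hP j).1 x)
      (fun j => hQpos j x) hα hk
  -- pick the max j
  obtain ⟨j0, _, hj0⟩ := Finset.exists_max_image Finset.univ A
    (Finset.univ_nonempty_iff.2 ⟨⟨0, hk⟩⟩)
  have havg : (1 / (k : ℝ)) * ∑ j, A j ≤ A j0 := by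
    rw [div_mul_eq_mul_div, one_mul, div_le_iff₀ hkR, mul_comm]
    calc ∑ j, A j ≤ ∑ _j : Fin k, A j0 := Finset.sum_le_sum fun j _ => hj0 j (Finset.mem_univ j)
      _ = k * A j0 := by simp [mul_comm]
  -- S > 0
  have hSpos : 0 < S := by
    obtain ⟨x0, hx0⟩ : ∃ x, 0 < ∑ j, P j x := by
      by_contra h
      push_neg at h
      have : ∑ x, ∑ j, P j x ≤ 0 := Finset.sum_nonpos fun x _ => h x
      rw [Finset.sum_comm] at this
      have heq : ∑ j, ∑ x, P j x = (k:ℝ) := by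
        rw [Finset.sum_congr rfl fun j _ => (hP j).2]; simp
      rw [heq] at this; linarith
    refine Finset.sum_pos' (fun x _ => ?_) ⟨x0, Finset.mem_univ x0, ?_⟩
    · have hQx : 0 < ∑ j, Q j x :=
        Finset.sum_pos (fun j _ => hQpos j x) (Finset.univ_nonempty_iff.2 ⟨⟨0, hk⟩⟩)
      have hPx : 0 ≤ ∑ j, P j x := Finset.sum_nonneg fun j _ => (hP j).1 x
      have hQx' : 0 < (1 / (k : ℝ)) * ∑ j, Q j x := by positivity
      have hr : 0 ≤ (((1 / (k : ℝ)) * ∑ j, P j x) / ((1 / (k : ℝ)) * ∑ j, Q j x)) ^ α :=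
        Real.rpow_nonneg (by positivity) α
      exact mul_nonneg hQx'.le hr
    · have hQx : 0 < ∑ j, Q j x0 :=
        Finset.sum_pos (fun j _ => hQpos j x0) (Finset.univ_nonempty_iff.2 ⟨⟨0, hk⟩⟩)
      have h1 : 0 < (1 / (k : ℝ)) * ∑ j, Q j x0 := by positivity
      have h2 : 0 < (1 / (k : ℝ)) * ∑ j, P j x0 := by positivity
      have : 0 < (((1 / (k : ℝ)) * ∑ j, P j x0) / ((1 / (k : ℝ)) * ∑ j, Q j x0)) ^ α := by
        apply Real.rpow_pos_of_pos; positivity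
      exact mul_pos h1 this
  -- conclude
  have hlog : Real.log S ≤ Real.log (A j0) :=
    Real.log_le_log hSpos (hSle.trans havg)
  have hinv : (0:ℝ) < (α - 1)⁻¹ := by
    rw [inv_pos]; linarith
  have hfinal : renyiD α (fun x => (1 / (k : ℝ)) * ∑ j, P j x)
      (fun x => (1 / (k : ℝ)) * ∑ j, Q j x) ≤ renyiD α (P j0) (Q j0) := by
    unfold renyiD
    exact mul_le_mul_of_nonneg_left hlog hinv.le
  exact hfinal.trans (le_ciSup (f := fun j => renyiD α (P j) (Q j)) (Set.Finite.bddAbove (Set.finite_range _)) j0)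
end
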